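/- Let σ : SL(2,ℤ) → SL(2,ℤ) be the group automorphism sending [[a,b],[c,d]] to [[a,-b],[-c,d]] (conjugation by diag(-1,1)). Then the image of U₁ under σ equals the conjugate subgroup T·V₁·T⁻¹. -/

import Mathlib

open Matrix

/-- `SL(2,ℤ)`, the group of 2×2 integer matrices of determinant 1. -/
abbrev SL2Z := Matrix.SpecialLinearGroup (Fin 2) ℤ

/-- The matrix `T = [[1,1],[0,1]]` in `SL(2,ℤ)`. -/
def Tmat : SL2Z := ⟨!![1, 1; 0, 1], by norm_num [Matrix.det_fin_two_of]⟩

/-- The subgroup `U₁` of `SL(2,ℤ)`. -/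
def U1 : Subgroup SL2Z :=
  Subgroup.closure
    { (⟨!![1, 6; 0, 1], by norm_num [Matrix.det_fin_two_of]⟩ : SL2Z),
      ⟨!![1, -2; 1, -1], by norm_num [Matrix.det_fin_two_of]⟩,
      ⟨!![0, -1; 1, 1], by norm_num [Matrix.det_fin_two_of]⟩ }

/-- The subgroup `V₁` of `SL(2,ℤ)`. -/
def V1 : Subgroup SL2Z :=
  Subgroup.closure
    { (⟨!![1, 6; 0, 1], by norm_num [Matrix.det_fin_two_of]⟩ : SL2Z),
      ⟨!![4, -17; 1, -4], by norm_num [Matrix.det_fin_two_of]⟩,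
      ⟨!![0, -1; 1, 1], by norm_num [Matrix.det_fin_two_of]⟩ }

namespace SigmaU1Proof

def A : SL2Z := ⟨!![1, -6; 0, 1], by norm_num [Matrix.det_fin_two_of]⟩
def B : SL2Z := ⟨!![1, 2; -1, -1], by norm_num [Matrix.det_fin_two_of]⟩
def C : SL2Z := ⟨!![0, 1; -1, 1], by norm_num [Matrix.det_fin_two_of]⟩
def P : SL2Z := ⟨!![1, 6; 0, 1], by norm_num [Matrix.det_fin_two_of]⟩
def Q : SL2Z := ⟨!![5, -26; 1, -5], by norm_num [Matrix.det_fin_two_of]⟩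
def S : SL2Z := ⟨!![1, -1; 1, 0], by norm_num [Matrix.det_fin_two_of]⟩

lemma hAP : A * P = 1 := by
  ext i j
  simp only [Matrix.SpecialLinearGroup.coe_mul]
  fin_cases i <;> fin_cases j <;>
    simp [A, P, Matrix.mul_apply, Fin.sum_univ_two]

lemma hCS : C * S = 1 := by
  ext i j
  simp only [Matrix.SpecialLinearGroup.coe_mul]
  fin_cases i <;> fin_cases j <;>
    simp [C, S, Matrix.mul_apply, Fin.sum_univ_two]

lemma hBAQ : B * (A * Q) = A := by
  ext i j
  simp only [Matrix.SpecialLinearGroup.coe_mul]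
  fin_cases i <;> fin_cases j <;>
    simp [A, B, Q, Matrix.mul_apply, Fin.sum_univ_two]

lemma hPinv : P = A⁻¹ := (inv_eq_of_mul_eq_one_right hAP).symm
lemma hSinv : S = C⁻¹ := (inv_eq_of_mul_eq_one_right hCS).symm
lemma hAinv : A = P⁻¹ := by rw [hPinv, inv_inv]
lemma hCinv : C = S⁻¹ := by rw [hSinv, inv_inv]

lemma hQeq : Q = A⁻¹ * (B⁻¹ * A) := by
  have h1 : A * Q = B⁻¹ * A := by
    calc A * Q = B⁻¹ * (B * (A * Q)) := by group
    _ = B⁻¹ * A := by rw [hBAQ]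
  rw [← h1]; group

lemma hBeq : B = P⁻¹ * (Q⁻¹ * P) := by
  rw [hPinv, hQeq]; group

lemma closure_eq : Subgroup.closure {A, B, C} = Subgroup.closure {P, Q, S} := by
  apply le_antisymm
  · rw [Subgroup.closure_le]
    rintro x hx
    have hP : P ∈ Subgroup.closure ({P, Q, S} : Set SL2Z) :=
      Subgroup.subset_closure (by simp)
    have hQm : Q ∈ Subgroup.closure ({P, Q, S} : Set SL2Z) :=
      Subgroup.subset_closure (by simp)
    have hS : S ∈ Subgroup.closure ({P, Q, S} : Set SL2Z) :=
      Subgroup.subset_closure (by simp)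
    simp only [Set.mem_insert_iff, Set.mem_singleton_iff] at hx
    rcases hx with rfl | rfl | rfl
    · rw [hAinv]; exact inv_mem hP
    · rw [hBeq]; exact mul_mem (inv_mem hP) (mul_mem (inv_mem hQm) hP)
    · rw [hCinv]; exact inv_mem hS
  · rw [Subgroup.closure_le]
    rintro x hx
    have hA : A ∈ Subgroup.closure ({A, B, C} : Set SL2Z) :=
      Subgroup.subset_closure (by simp)
    have hB : B ∈ Subgroup.closure ({A, B, C} : Set SL2Z) :=
      Subgroup.subset_closure (by simp)
    have hC : C ∈ Subgroup.closure ({A, B, C} : Set SL2Z) :=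
      Subgroup.subset_closure (by simp)
    simp only [Set.mem_insert_iff, Set.mem_singleton_iff] at hx
    rcases hx with rfl | rfl | rfl
    · rw [hPinv]; exact inv_mem hA
    · rw [hQeq]; exact mul_mem (inv_mem hA) (mul_mem (inv_mem hB) hA)
    · rw [hSinv]; exact inv_mem hC

end SigmaU1Proof

open SigmaU1Proof in
/-- If `σ` is the group automorphism of `SL(2,ℤ)` sending `[[a,b],[c,d]]` to
`[[a,-b],[-c,d]]` (conjugation by `diag(-1,1)`), then `σ(U₁) = T·V₁·T⁻¹`. -/
theorem sigma_U1_eq_conj_V1 (σ : SL2Z ≃* SL2Z)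
    (hσ : ∀ g : SL2Z,
      ((σ g : SL2Z) : Matrix (Fin 2) (Fin 2) ℤ) = !![g 0 0, -(g 0 1); -(g 1 0), g 1 1]) :
    Subgroup.map σ.toMonoidHom U1 = Subgroup.map (MulAut.conj Tmat).toMonoidHom V1 := by
  rw [U1, V1, MonoidHom.map_closure, MonoidHom.map_closure]
  erw [Set.image_insert_eq, Set.image_insert_eq, Set.image_singleton,
      Set.image_insert_eq, Set.image_insert_eq, Set.image_singleton]
  have h1 : σ.toMonoidHom (⟨!![1, 6; 0, 1], by norm_num [Matrix.det_fin_two_of]⟩ : SL2Z) = A := by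
    apply Subtype.ext
    erw [show (σ.toMonoidHom _ : SL2Z) = σ _ from rfl, hσ]
    ext i j; fin_cases i <;> fin_cases j <;> simp [A]
  have h2 : σ.toMonoidHom (⟨!![1, -2; 1, -1], by norm_num [Matrix.det_fin_two_of]⟩ : SL2Z) = B := by
    apply Subtype.ext
    erw [show (σ.toMonoidHom _ : SL2Z) = σ _ from rfl, hσ]
    ext i j; fin_cases i <;> fin_cases j <;> simp [B]
  have h3 : σ.toMonoidHom (⟨!![0, -1; 1, 1], by norm_num [Matrix.det_fin_two_of]⟩ : SL2Z) = C := by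
    apply Subtype.ext
    erw [show (σ.toMonoidHom _ : SL2Z) = σ _ from rfl, hσ]
    ext i j; fin_cases i <;> fin_cases j <;> simp [C]
  have k1 : (MulAut.conj Tmat).toMonoidHom (⟨!![1, 6; 0, 1], by norm_num [Matrix.det_fin_two_of]⟩ : SL2Z) = P := by
    erw [show (MulAut.conj Tmat).toMonoidHom _ = Tmat * _ * Tmat⁻¹ from rfl,
        mul_inv_eq_iff_eq_mul]
    ext i j
    erw [Matrix.SpecialLinearGroup.coe_mul, Matrix.SpecialLinearGroup.coe_mul]
    fin_cases i <;> fin_cases j <;>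
      simp [Tmat, P, Matrix.mul_apply, Fin.sum_univ_two]
  have k2 : (MulAut.conj Tmat).toMonoidHom (⟨!![4, -17; 1, -4], by norm_num [Matrix.det_fin_two_of]⟩ : SL2Z) = Q := by
    erw [show (MulAut.conj Tmat).toMonoidHom _ = Tmat * _ * Tmat⁻¹ from rfl,
        mul_inv_eq_iff_eq_mul]
    ext i j
    erw [Matrix.SpecialLinearGroup.coe_mul, Matrix.SpecialLinearGroup.coe_mul]
    fin_cases i <;> fin_cases j <;>
      simp [Tmat, Q, Matrix.mul_apply, Fin.sum_univ_two]
  have k3 : (MulAut.conj Tmat).toMonoidHom (⟨!![0, -1; 1, 1], by norm_num [Matrix.det_fin_two_of]⟩ : SL2Z) = S := by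
    erw [show (MulAut.conj Tmat).toMonoidHom _ = Tmat * _ * Tmat⁻¹ from rfl,
        mul_inv_eq_iff_eq_mul]
    ext i j
    erw [Matrix.SpecialLinearGroup.coe_mul, Matrix.SpecialLinearGroup.coe_mul]
    fin_cases i <;> fin_cases j <;>
      simp [Tmat, S, Matrix.mul_apply, Fin.sum_univ_two]
  erw [h1, h2, h3, k1, k2, k3]
  exact closure_eq
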